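/- arXiv:2404.06805 — 5 statements merged into one kernel-verified Lean document; each statement's English description precedes it below -/
import Mathlib

section
/- Dini's theorem for strongly countably compact spaces: let (M,d) be a strongly countably compact metric space, let F_n : M → ℝ be continuous for each n ∈ ℕ, let F : M → ℝ be continuous, and suppose that for every x ∈ M the sequence (F_n(x))_{n∈ℕ} is monotone increasing and converges to F(x). Then the convergence is uniform: for every ε > 0 there exists N ∈ ℕ such that |F(x) − F_n(x)| < ε for all n ≥ N and all x ∈ M. -/
/-- Dini's theorem for strongly countably compact metric spaces. -/
theorem dini_stronglyCountablyCompact {M : Type*} [MetricSpace M]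
    (hM : ∀ O : ℕ → Set M, (∀ n, IsOpen (O n)) → (∀ x : M, ∃ n, x ∈ O n) →
      ∃ m : ℕ, ∀ x : M, ∃ n ≤ m, x ∈ O n)
    (Fn : ℕ → M → ℝ) (F : M → ℝ)
    (hFn : ∀ n, Continuous (Fn n)) (hF : Continuous F)
    (hmono : ∀ x : M, Monotone fun n => Fn n x)
    (hconv : ∀ x : M, Filter.Tendsto (fun n => Fn n x) Filter.atTop (nhds (F x))) :
    ∀ ε > (0 : ℝ), ∃ N : ℕ, ∀ n ≥ N, ∀ x : M, |F x - Fn n x| < ε := by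
  intro ε hε
  have hle : ∀ n x, Fn n x ≤ F x := fun n x =>
    ge_of_tendsto (hconv x) (Filter.eventually_atTop.2 ⟨n, fun k hk => hmono x hk⟩)
  set O : ℕ → Set M := fun n => {x | F x - Fn n x < ε} with hO
  obtain ⟨m, hm⟩ := hM O
    (fun n => isOpen_lt (by continuity) continuous_const)
    (fun x => by
      obtain ⟨n, hn⟩ := (Filter.Tendsto.eventually_const_lt
        (by linarith : F x - ε < F x) (hconv x)).exists
      exact ⟨n, by simp only [hO, Set.mem_setOf_eq]; linarith⟩)
  refine ⟨m, fun n hn x => ?_⟩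
  obtain ⟨k, hkm, hk⟩ := hm x
  have h1 : Fn k x ≤ Fn n x := hmono x (hkm.trans hn)
  have h2 : F x - Fn k x < ε := hk
  rw [abs_of_nonneg (by linarith [hle n x])]
  linarith
end

section
/- Let A ⊆ ℝ with 0 ∈ A and let Y : ℝ → ℕ be injective on A. Define d : A × A → ℝ by d(0,0) = 0, d(x,0) = d(0,x) = 1/2^{Y(x)} for x ∈ A with x ≠ 0, and d(x,y) = |1/2^{Y(x)} − 1/2^{Y(y)}| for x, y ∈ A with x ≠ 0 and y ≠ 0. Then d is a metric on A: d(x,y) = 0 iff x = y, d(x,y) = d(y,x) ≥ 0, and d(x,y) ≤ d(x,z) + d(z,y) for all x, y, z ∈ A. -/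
/-- The function `d` built from an injection `Y` of `A` into ℕ is a metric on `A`. -/
theorem metric_of_injection (A : Set ℝ) (h0 : (0 : ℝ) ∈ A) (Y : ℝ → ℕ)
    (hY : ∀ x ∈ A, ∀ y ∈ A, x ≠ y → Y x ≠ Y y)
    (d : ℝ → ℝ → ℝ)
    (hd00 : d 0 0 = 0)
    (hdx0 : ∀ x ∈ A, x ≠ 0 → d x 0 = 1 / 2 ^ Y x ∧ d 0 x = 1 / 2 ^ Y x)
    (hdxy : ∀ x ∈ A, ∀ y ∈ A, x ≠ 0 → y ≠ 0 →
      d x y = |1 / 2 ^ Y x - 1 / 2 ^ Y y|) :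
    (∀ x ∈ A, ∀ y ∈ A, (d x y = 0 ↔ x = y)) ∧
    (∀ x ∈ A, ∀ y ∈ A, d x y = d y x ∧ 0 ≤ d x y) ∧
    (∀ x ∈ A, ∀ y ∈ A, ∀ z ∈ A, d x y ≤ d x z + d z y) := by
  set e : ℝ → ℝ := fun x => if x = 0 then 0 else 1 / 2 ^ Y x with he
  have key : ∀ x ∈ A, ∀ y ∈ A, d x y = |e x - e y| := by
    intro x hx y hy
    by_cases hx0 : x = 0 <;> by_cases hy0 : y = 0
    · subst hx0; subst hy0; simp [hd00, he]
    · subst hx0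
      rw [(hdx0 y hy hy0).2]
      simp [he, hy0, abs_of_nonpos, abs_of_nonneg]
    · subst hy0
      rw [(hdx0 x hx hx0).1]
      simp [he, hx0, abs_of_nonneg]
    · rw [hdxy x hx y hy hx0 hy0]; simp [he, hx0, hy0]
  have einj : ∀ x ∈ A, ∀ y ∈ A, e x = e y → x = y := by
    intro x hx y hy hxy
    by_contra hne
    have hYne := hY x hx y hy hne
    have e0 : e 0 = 0 := if_pos rfl
    have en : ∀ z : ℝ, z ≠ 0 → e z = 1 / 2 ^ Y z := fun z hz => if_neg hz
    by_cases hx0 : x = 0 <;> by_cases hy0 : y = 0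
    · exact hne (hx0.trans hy0.symm)
    · rw [hx0, e0, en y hy0] at hxy
      have : (0:ℝ) < 1 / 2 ^ Y y := by positivity
      linarith
    · rw [hy0, e0, en x hx0] at hxy
      have : (0:ℝ) < 1 / 2 ^ Y x := by positivity
      linarith
    · rw [en x hx0, en y hy0] at hxy
      field_simp at hxy
      exact hYne ((pow_right_inj₀ (by norm_num : (0:ℝ) < 2) (by norm_num)).mp hxy.symm)
  refine ⟨?_, ?_, ?_⟩
  · intro x hx y hy
    rw [key x hx y hy]
    constructor
    · intro h
      exact einj x hx y hy (by linarith [abs_eq_zero.mp h, sub_eq_zero.mp (abs_eq_zero.mp h)])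
    · rintro rfl; simp
  · intro x hx y hy
    rw [key x hx y hy, key y hy x hx]
    exact ⟨abs_sub_comm _ _, abs_nonneg _⟩
  · intro x hx y hy z hz
    rw [key x hx y hy, key x hx z hz, key z hz y hy]
    exact abs_sub_le _ _ _
end

section
/- Let A ⊆ ℝ with 0 ∈ A, let Y : ℝ → ℕ be injective on A, and define d : A × A → ℝ by d(0,0) = 0, d(x,0) = d(0,x) = 1/2^{Y(x)} for x ∈ A with x ≠ 0, and d(x,y) = |1/2^{Y(x)} − 1/2^{Y(y)}| for x, y ∈ A with x ≠ 0 and y ≠ 0. Then the metric space (A,d) is sequentially compact: every sequence in A has a subsequence that converges with respect to d to a point of A. -/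
/-- The metric space `(A, d)` built from an injection `Y` of `A` into ℕ is
sequentially compact. -/
theorem seqCompact_of_injection_metric (A : Set ℝ) (h0 : (0 : ℝ) ∈ A) (Y : ℝ → ℕ)
    (hY : ∀ x ∈ A, ∀ y ∈ A, x ≠ y → Y x ≠ Y y)
    (d : ℝ → ℝ → ℝ)
    (hd00 : d 0 0 = 0)
    (hdx0 : ∀ x ∈ A, x ≠ 0 → d x 0 = 1 / 2 ^ Y x ∧ d 0 x = 1 / 2 ^ Y x)
    (hdxy : ∀ x ∈ A, ∀ y ∈ A, x ≠ 0 → y ≠ 0 →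
      d x y = |1 / 2 ^ Y x - 1 / 2 ^ Y y|) :
    ∀ x : ℕ → ℝ, (∀ n, x n ∈ A) →
      ∃ w ∈ A, ∃ φ : ℕ → ℕ, StrictMono φ ∧
        ∀ ε > (0 : ℝ), ∃ N : ℕ, ∀ n ≥ N, d (x (φ n)) w < ε := by
  intro x hx
  by_cases hcase : ∃ v : ℝ, {n : ℕ | x n = v}.Infinite
  · -- some value repeats infinitely often
    obtain ⟨v, hv⟩ := hcase
    obtain ⟨n0, hn0⟩ := hv.nonempty
    have hvA : v ∈ A := hn0 ▸ hx n0
    have hdvv : d v v = 0 := by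
      by_cases hv0 : v = 0
      · rw [hv0]; exact hd00
      · rw [hdxy v hvA v hvA hv0 hv0, sub_self, abs_zero]
    refine ⟨v, hvA, Nat.nth (fun n => x n = v), Nat.nth_strictMono hv, ?_⟩
    intro ε hε
    refine ⟨0, fun n _ => ?_⟩
    have : x (Nat.nth (fun n => x n = v) n) = v := Nat.nth_mem_of_infinite hv n
    rw [this, hdvv]; exact hε
  · -- every value repeats only finitely often; then Y ∘ x escapes to ∞
    push_neg at hcase
    have hfin : ∀ k : ℕ, {n : ℕ | Y (x n) < k}.Finite := by
      intro k
      have : {n : ℕ | Y (x n) < k} ⊆ ⋃ j ∈ Finset.range k, {n : ℕ | Y (x n) = j} := by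
        intro n hn
        simp only [Set.mem_iUnion, Finset.mem_range, Set.mem_setOf_eq]
        exact ⟨Y (x n), hn, rfl⟩
      refine Set.Finite.subset ?_ this
      refine Set.Finite.biUnion (Finset.range k).finite_toSet (fun j _ => ?_)
      by_cases hne : ∃ n0 : ℕ, Y (x n0) = j
      · obtain ⟨n0, hn0⟩ := hne
        refine Set.Finite.subset (hcase (x n0)) ?_
        intro n hn
        simp only [Set.mem_setOf_eq] at hn ⊢
        by_contra hne'
        exact hY (x n) (hx n) (x n0) (hx n0) hne' (hn.trans hn0.symm)
      · push_neg at hne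
        convert Set.finite_empty
        ext n; simp [hne n]
    -- for each k, N there is n ≥ N with Y (x n) ≥ k
    have key : ∀ k N : ℕ, ∃ n : ℕ, N ≤ n ∧ k ≤ Y (x n) := by
      intro k N
      obtain ⟨m, hm⟩ := (hfin k).bddAbove
      refine ⟨max (m + 1) N, le_max_right _ _, ?_⟩
      by_contra hlt
      push_neg at hlt
      have := hm (show (max (m+1) N) ∈ {n : ℕ | Y (x n) < k} from hlt)
      omega
    -- build a strictly monotone subsequence with Y (x (φ n)) ≥ n
    choose g hg1 hg2 using key
    let φ : ℕ → ℕ := fun n => Nat.rec (g 0 0) (fun k ih => g (k + 1) (ih + 1)) n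
    have hφsucc : ∀ n, φ (n + 1) = g (n + 1) (φ n + 1) := fun n => rfl
    have hφs : StrictMono φ := strictMono_nat_of_lt_succ (fun n => by
      rw [hφsucc]; have := hg1 (n + 1) (φ n + 1); omega)
    have hφY : ∀ n, n ≤ Y (x (φ n)) := by
      intro n
      cases n with
      | zero => exact Nat.zero_le _
      | succ k => rw [hφsucc]; exact hg2 (k + 1) (φ k + 1)
    refine ⟨0, h0, φ, hφs, ?_⟩
    intro ε hε
    obtain ⟨N, hN⟩ := exists_pow_lt_of_lt_one hε (by norm_num : (1:ℝ)/2 < 1)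
    refine ⟨N, fun n hn => ?_⟩
    by_cases hz : x (φ n) = 0
    · rw [hz, hd00]; exact hε
    · rw [(hdx0 (x (φ n)) (hx (φ n)) hz).1]
      have h1 : (1:ℝ) / 2 ^ Y (x (φ n)) = ((1:ℝ)/2) ^ Y (x (φ n)) := by
        rw [div_pow, one_pow]
      rw [h1]
      calc ((1:ℝ)/2) ^ Y (x (φ n)) ≤ ((1:ℝ)/2) ^ N := by
            apply pow_le_pow_of_le_one (by norm_num) (by norm_num)
            exact le_trans hn (hφY n)
        _ < ε := hN
end

section
/- Let A ⊆ ℝ with 0 ∈ A, let Y : ℝ → ℕ be injective on A, and define d : A × A → ℝ by d(0,0) = 0, d(x,0) = d(0,x) = 1/2^{Y(x)} for x ∈ A with x ≠ 0, and d(x,y) = |1/2^{Y(x)} − 1/2^{Y(y)}| for x, y ∈ A with x ≠ 0 and y ≠ 0. Then (A,d) is countably compact: for every sequence (a_n)_{n∈ℕ} in A and every sequence (r_n)_{n∈ℕ} of positive rationals such that A ⊆ ⋃_{n∈ℕ} B_d(a_n, r_n), there exists m ∈ ℕ such that A ⊆ ⋃_{n≤m} B_d(a_n, r_n), where B_d(a,r)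 = {y ∈ A : d(a,y) < r}. -/
/-- The metric space `(A, d)` built from an injection `Y` of `A` into ℕ is
countably compact. -/
theorem countablyCompact_of_injection_metric (A : Set ℝ) (h0 : (0 : ℝ) ∈ A) (Y : ℝ → ℕ)
    (hY : ∀ x ∈ A, ∀ y ∈ A, x ≠ y → Y x ≠ Y y)
    (d : ℝ → ℝ → ℝ)
    (hd00 : d 0 0 = 0)
    (hdx0 : ∀ x ∈ A, x ≠ 0 → d x 0 = 1 / 2 ^ Y x ∧ d 0 x = 1 / 2 ^ Y x)
    (hdxy : ∀ x ∈ A, ∀ y ∈ A, x ≠ 0 → y ≠ 0 →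
      d x y = |1 / 2 ^ Y x - 1 / 2 ^ Y y|)
    (a : ℕ → ℝ) (ha : ∀ n, a n ∈ A)
    (r : ℕ → ℚ) (hr : ∀ n, 0 < r n)
    (hcov : ∀ x ∈ A, ∃ n : ℕ, d (a n) x < (r n : ℝ)) :
    ∃ m : ℕ, ∀ x ∈ A, ∃ n ≤ m, d (a n) x < (r n : ℝ) := by
  classical
  set f : ℝ → ℝ := fun x => if x = 0 then 0 else 1 / 2 ^ Y x with hf
  have hf0 : ∀ x, 0 ≤ f x := by
    intro x
    simp only [hf]
    split <;> positivity
  have hdf : ∀ x ∈ A, ∀ y ∈ A, d x y = |f x - f y| := by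
    intro x hx y hy
    by_cases hx0 : x = 0 <;> by_cases hy0 : y = 0
    · subst hx0; subst hy0; simp [hf, hd00]
    · subst hx0
      rw [(hdx0 y hy hy0).2]
      simp only [hf, if_pos rfl, if_neg hy0, zero_sub, abs_neg]
      rw [abs_of_pos (by positivity)]
    · subst hy0
      rw [(hdx0 x hx hx0).1]
      simp only [hf, if_pos rfl, if_neg hx0, sub_zero]
      rw [abs_of_pos (by positivity)]
    · rw [hdxy x hx y hy hx0 hy0]
      simp only [hf, if_neg hx0, if_neg hy0]
  obtain ⟨N, hN⟩ := hcov 0 h0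
  have hfa : f (a N) = d (a N) 0 := by
    rw [hdf (a N) (ha N) 0 h0]
    simp only [hf, if_pos rfl, sub_zero]
    rw [abs_of_nonneg (hf0 (a N))]
  set ε : ℝ := (r N : ℝ) - d (a N) 0 with hε
  have hεpos : 0 < ε := by simp [hε]; linarith
  obtain ⟨K, hK⟩ : ∃ K : ℕ, (1 : ℝ) / 2 ^ K < ε := by
    obtain ⟨K, hK⟩ := exists_pow_lt_of_lt_one hεpos (by norm_num : (1:ℝ)/2 < 1)
    exact ⟨K, by rwa [div_pow, one_pow] at hK⟩
  have hF : {x | x ∈ A ∧ Y x ≤ K}.Finite := by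
    apply Set.Finite.of_finite_image (f := Y)
    · exact (Set.finite_Iic K).subset (by rintro _ ⟨x, ⟨_, hx⟩, rfl⟩; exact hx)
    · intro x hx y hy hxy
      by_contra hne
      exact hY x hx.1 y hy.1 hne hxy
  have hch : ∀ x : ℝ, ∃ k : ℕ, x ∈ A → d (a k) x < (r k : ℝ) := by
    intro x
    by_cases hx : x ∈ A
    · exact (hcov x hx).imp fun k hk _ => hk
    · exact ⟨0, fun h => absurd h hx⟩
  choose n hn using hch
  refine ⟨N ⊔ hF.toFinset.sup n, ?_⟩
  intro x hx
  by_cases hcase : f x < ε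
  · refine ⟨N, le_sup_left, ?_⟩
    rw [hdf (a N) (ha N) x hx, abs_sub_lt_iff]
    have h1 : f (a N) < (r N : ℝ) := by rw [hfa]; linarith [hr N, hN]
    constructor <;> [skip; skip] <;>
      · have := hf0 x; have := hf0 (a N); simp only [hε] at hcase; linarith [hfa]
  · have hx0 : x ≠ 0 := by
      intro h
      apply hcase
      rw [h]
      simpa [hf] using hεpos
    have hfx : f x = 1 / 2 ^ Y x := by simp [hf, hx0]
    have hYx : Y x ≤ K := by
      by_contra hgt
      push_neg at hgt
      apply hcase
      calc f x = 1 / 2 ^ Y x := hfx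
        _ ≤ 1 / 2 ^ K := by
            apply one_div_le_one_div_of_le (by positivity)
            exact pow_le_pow_right₀ (by norm_num) hgt.le
        _ < ε := hK
    have hxF : x ∈ hF.toFinset := by rw [Set.Finite.mem_toFinset]; exact ⟨hx, hYx⟩
    exact ⟨n x, le_sup_of_le_right (Finset.le_sup hxF), hn x hx⟩
end

section
/- Let A ⊆ ℝ with 0 ∈ A, let Y : ℝ → ℕ be injective on A, and define d : A × A → ℝ by d(0,0) = 0, d(x,0) = d(0,x) = 1/2^{Y(x)} for x ∈ A with x ≠ 0, and d(x,y) = |1/2^{Y(x)} − 1/2^{Y(y)}| for x, y ∈ A with x ≠ 0 and y ≠ 0. If (x_n)_{n∈ℕ} is a sequence in A that is dense in (A,d), i.e. for every x ∈ A and every k ∈ ℕ there exists n ∈ ℕ with d(x, x_n) < 1/2^k, then for every x ∈ A with x ≠ 0 there exists n ∈ ℕ with x = x_n; in particular, A is countable. -/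
lemma pow_half_close {a b : ℕ} (h : |1 / 2 ^ a - 1 / 2 ^ b| < (1 : ℝ) / 2 ^ (a + 1)) :
    a = b := by
  by_contra hne
  rcases lt_or_gt_of_ne hne with hlt | hgt
  · -- a < b, so 1/2^a - 1/2^b ≥ 1/2^(a+1)
    have hb : (1 : ℝ) / 2 ^ b ≤ 1 / 2 ^ (a + 1) := by
      apply one_div_le_one_div_of_le (by positivity)
      exact pow_le_pow_right₀ (by norm_num) hlt
    have : (1:ℝ)/2^(a+1) ≤ 1/2^a - 1/2^b := by
      have : (1:ℝ)/2^a = 2 * (1/2^(a+1)) := by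
        rw [pow_succ]; ring
      linarith
    have habs : (1:ℝ)/2^a - 1/2^b ≤ |1/2^a - 1/2^b| := le_abs_self _
    linarith
  ·
    have hb : (1 : ℝ) / 2 ^ a ≤ 1 / 2 ^ (b + 1) := by
      apply one_div_le_one_div_of_le (by positivity)
      exact pow_le_pow_right₀ (by norm_num) hgt
    have h2 : (1:ℝ)/2^b = 2 * (1/2^(b+1)) := by rw [pow_succ]; ring
    have habs : (1:ℝ)/2^b - 1/2^a ≤ |1/2^a - 1/2^b| := by
      rw [abs_sub_comm]; exact le_abs_self _
    have hpos : (0:ℝ) < 1/2^(a+1) := by positivity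
    have hle : (1:ℝ)/2^(a+1) ≤ 1/2^a := by
      apply one_div_le_one_div_of_le (by positivity)
      exact pow_le_pow_right₀ (by norm_num) (Nat.le_succ a)
    linarith

/-- If the metric space `(A, d)` built from an injection `Y` of `A` into ℕ is
separable via a dense sequence `(x_n)`, then every nonzero element of `A`
occurs in the sequence; in particular `A` is countable. -/
theorem enumeration_of_separable_injection_metric (A : Set ℝ) (h0 : (0 : ℝ) ∈ A)
    (Y : ℝ → ℕ)
    (hY : ∀ x ∈ A, ∀ y ∈ A, x ≠ y → Y x ≠ Y y)
    (d : ℝ → ℝ → ℝ)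
    (hd00 : d 0 0 = 0)
    (hdx0 : ∀ x ∈ A, x ≠ 0 → d x 0 = 1 / 2 ^ Y x ∧ d 0 x = 1 / 2 ^ Y x)
    (hdxy : ∀ x ∈ A, ∀ y ∈ A, x ≠ 0 → y ≠ 0 →
      d x y = |1 / 2 ^ Y x - 1 / 2 ^ Y y|)
    (x : ℕ → ℝ) (hx : ∀ n, x n ∈ A)
    (hdense : ∀ w ∈ A, ∀ k : ℕ, ∃ n : ℕ, d w (x n) < 1 / 2 ^ k) :
    (∀ w ∈ A, w ≠ 0 → ∃ n : ℕ, w = x n) ∧ A.Countable := by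
  have main : ∀ w ∈ A, w ≠ 0 → ∃ n : ℕ, w = x n := by
    intro w hw hw0
    obtain ⟨n, hn⟩ := hdense w hw (Y w + 1)
    by_cases hxn : x n = 0
    · exfalso
      rw [hxn] at hn
      have := (hdx0 w hw hw0).1
      rw [this] at hn
      have : (1:ℝ)/2^(Y w + 1) < 1/2^(Y w) := by
        apply one_div_lt_one_div_of_lt (by positivity)
        exact pow_lt_pow_right₀ (by norm_num) (Nat.lt_succ_self _)
      linarith
    · refine ⟨n, ?_⟩
      rw [hdxy w hw (x n) (hx n) hw0 hxn] at hn
      have hYeq := pow_half_close hn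
      by_contra hne
      exact hY w hw (x n) (hx n) hne hYeq
  refine ⟨main, ?_⟩
  have hsub : A ⊆ insert (0:ℝ) (Set.range x) := by
    intro w hw
    by_cases hw0 : w = 0
    · exact hw0 ▸ Set.mem_insert _ _
    · obtain ⟨n, hn⟩ := main w hw hw0
      exact Set.mem_insert_of_mem _ ⟨n, hn.symm⟩
  exact Set.Countable.mono hsub ((Set.countable_range x).insert 0)
end
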